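/- The LRU invariant candidate π(r) = ∏_{k=1}^B λ_{r(k)}/(Λ - Σ_{i=1}^{k-1} λ_{r(i)}) defines a probability distribution on the set of B-permutations of {1,...,N}: it is nonnegative and sums to 1 over all injective sequences r of length B from {1,...,N}. -/

import Mathlib

open Finset

/-- The LRU invariant candidate, for a cache state given by an injective
`r : Fin B → Fin N` (0-based ranks). -/
noncomputable def piLRU (N B : ℕ) (lam : Fin N → ℝ) (r : Fin B → Fin N) : ℝ :=
  ∏ k : Fin B,
    lam (r k) / ((∑ n, lam n) - ∑ i ∈ Finset.univ.filter (fun i : Fin B => i < k), lam (r i))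

section aux

variable {N : ℕ} (lam : Fin N → ℝ)

lemma denom_eq {B : ℕ} (r : Fin B → Fin N) (hr : Function.Injective r) (s : Finset (Fin B)) :
    (∑ n, lam n) - ∑ i ∈ s, lam (r i) = ∑ n ∈ univ \ s.image r, lam n := by
  rw [Finset.sum_sdiff_eq_sub (subset_univ _),
    Finset.sum_image (fun a _ b _ h => hr h)]

lemma denom_pos (hlam : ∀ n, 0 < lam n) {B : ℕ} (r : Fin B → Fin N)
    (hr : Function.Injective r) (k : Fin B) :
    0 < (∑ n, lam n) - ∑ i ∈ univ.filter (fun i : Fin B => i < k), lam (r i) := by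
  rw [denom_eq lam r hr]
  apply Finset.sum_pos (fun n _ => hlam n)
  refine ⟨r k, Finset.mem_sdiff.2 ⟨mem_univ _, ?_⟩⟩
  simp only [Finset.mem_image, Finset.mem_filter, mem_univ, true_and]
  rintro ⟨i, hik, hi⟩
  exact absurd (hr hi) (ne_of_lt hik)

lemma piLRU_snoc {B : ℕ} (r : Fin B → Fin N) (n : Fin N) :
    piLRU N (B + 1) lam (Fin.snoc r n) =
      piLRU N B lam r * (lam n / ((∑ m, lam m) - ∑ i, lam (r i))) := by
  unfold piLRU
  rw [Fin.prod_univ_castSucc]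
  congr 1
  · refine Finset.prod_congr rfl fun j _ => ?_
    rw [Fin.snoc_castSucc]
    congr 2
    rw [Finset.sum_filter, Finset.sum_filter, Fin.sum_univ_castSucc]
    simp [Fin.snoc_castSucc, Fin.castSucc_lt_castSucc_iff,
      (Fin.castSucc_lt_last j).not_gt]
  · rw [Fin.snoc_last]
    congr 2
    rw [Finset.sum_filter, Fin.sum_univ_castSucc]
    simp [Fin.snoc_castSucc, Fin.castSucc_lt_last]

lemma snoc_injective {B : ℕ} {r : Fin B → Fin N} (hr : Function.Injective r)
    {n : Fin N} (hn : ∀ i, r i ≠ n) : Function.Injective (Fin.snoc r n : Fin (B+1) → Fin N) := by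
  intro a b hab
  induction a using Fin.lastCases with
  | last =>
    induction b using Fin.lastCases with
    | last => rfl
    | cast b =>
      rw [Fin.snoc_last, Fin.snoc_castSucc] at hab
      exact absurd hab.symm (hn b)
  | cast a =>
    induction b using Fin.lastCases with
    | last =>
      rw [Fin.snoc_last, Fin.snoc_castSucc] at hab
      exact absurd hab (hn a)
    | cast b =>
      rw [Fin.snoc_castSucc, Fin.snoc_castSucc] at hab
      rw [hr hab]

lemma key (hlam : ∀ n, 0 < lam n) :
    ∀ B : ℕ, B ≤ N →
      ∑ r ∈ (univ : Finset (Fin B → Fin N)).filter (fun r => Function.Injective r),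
        piLRU N B lam r = 1 := by
  intro B
  induction B with
  | zero =>
    intro _
    rw [Finset.filter_true_of_mem (fun r _ => Function.injective_of_subsingleton r)]
    simp [piLRU]
  | succ B ih =>
    intro hBN
    have hB : B ≤ N := Nat.le_of_succ_le hBN
    have hstep : ∀ r : Fin B → Fin N, Function.Injective r →
        ∑ n ∈ univ.filter (fun n : Fin N => ∀ i, r i ≠ n),
          piLRU N (B+1) lam (Fin.snoc r n) = piLRU N B lam r := by
      intro r hr
      have hcpl : univ.filter (fun n : Fin N => ∀ i, r i ≠ n) = univ \ univ.image r := by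
        ext n
        simp [eq_comm]
      have hD : (∑ m, lam m) - ∑ i, lam (r i) = ∑ n ∈ univ \ univ.image r, lam n :=
        denom_eq lam r hr univ
      have hDpos : 0 < (∑ m, lam m) - ∑ i, lam (r i) := by
        rw [hD]
        apply Finset.sum_pos (fun n _ => hlam n)
        rw [← Finset.card_pos, Finset.card_sdiff_of_subset (subset_univ _),
          Finset.card_image_of_injective _ hr]
        simp only [Finset.card_univ, Fintype.card_fin]
        omega
      calc ∑ n ∈ univ.filter (fun n : Fin N => ∀ i, r i ≠ n),
            piLRU N (B+1) lam (Fin.snoc r n)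
          = ∑ n ∈ univ \ univ.image r,
            piLRU N B lam r * (lam n / ((∑ m, lam m) - ∑ i, lam (r i))) := by
            rw [hcpl]; exact Finset.sum_congr rfl fun n _ => piLRU_snoc lam r n
        _ = piLRU N B lam r := by
            rw [← Finset.mul_sum, ← Finset.sum_div, ← hD, div_self hDpos.ne', mul_one]
    have hbij :
        ∑ r ∈ (univ : Finset (Fin (B+1) → Fin N)).filter (fun r => Function.Injective r),
          piLRU N (B+1) lam r
        = ∑ p ∈ ((univ : Finset (Fin B → Fin N)).filter (fun r => Function.Injective r)).sigma
            (fun r => univ.filter (fun n : Fin N => ∀ i, r i ≠ n)),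
            piLRU N (B+1) lam (Fin.snoc p.1 p.2) := by
      refine Finset.sum_nbij' (fun r => ⟨Fin.init r, r (Fin.last B)⟩)
        (fun p => Fin.snoc p.1 p.2) ?_ ?_ ?_ ?_ ?_
      · intro r hrm
        simp only [Finset.mem_filter, mem_univ, true_and] at hrm
        simp only [Finset.mem_sigma, Finset.mem_filter, mem_univ, true_and]
        refine ⟨hrm.comp (Fin.castSucc_injective B), fun i h => ?_⟩
        exact absurd (hrm h) (Fin.castSucc_lt_last i).ne
      · intro p hp
        simp only [Finset.mem_sigma, Finset.mem_filter, mem_univ, true_and] at hp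
        simp only [Finset.mem_filter, mem_univ, true_and]
        exact snoc_injective hp.1 hp.2
      · intro r _
        exact Fin.snoc_init_self r
      · intro p _
        refine Sigma.ext ?_ ?_
        · simp [Fin.init_snoc]
        · simp [Fin.snoc_last]
      · intro r _
        rw [Fin.snoc_init_self r]
    rw [hbij, Finset.sum_sigma]
    rw [Finset.sum_congr rfl (fun r hrm => hstep r (by simpa using hrm))]
    exact ih hB

end aux

/-- The LRU invariant candidate is a probability distribution on B-permutations:
nonnegative, and sums to 1 over all injective sequences of length B from {1,...,N}. -/
theorem piLRU_prob (N B : ℕ) (hN : 1 ≤ N) (hB : 1 ≤ B) (hBN : B ≤ N)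
    (lam : Fin N → ℝ) (hlam : ∀ n, 0 < lam n) :
    (∀ r : Fin B ↪ Fin N, 0 ≤ piLRU N B lam r) ∧
      (∑ r : Fin B ↪ Fin N, piLRU N B lam r) = 1 := by
  constructor
  · intro r
    refine Finset.prod_nonneg fun k _ => div_nonneg (hlam _).le ?_
    exact (denom_pos lam hlam r r.injective k).le
  · have h1 := key lam hlam B hBN
    rw [Finset.sum_subtype (p := fun r : Fin B → Fin N => Function.Injective r) _
      (fun r => by simp) (fun r => piLRU N B lam r)] at h1
    rw [← h1]
    exact Fintype.sum_equiv (Equiv.subtypeInjectiveEquivEmbedding (Fin B) (Fin N)).symm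
      _ _ (fun r => rfl)
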